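/- (Lemma 1, general form) For any A and B₁,...,B_J in an associative ring, the total antisymmetrization over the B's of the (J+1)-bracket [A B₁ ⋯ B_J] equals J! times the total antisymmetrization over the B's of Σ_{j=0}^{J} (−1)^j B₁⋯B_j A B_{j+1}⋯B_J. -/
import Mathlib

/-- The Nambu `n`-bracket: signed sum over all permutations of the ordered product. -/
def nambu {R : Type*} [Ring R] {n : ℕ} (f : Fin n → R) : R :=
  ∑ σ : Equiv.Perm (Fin n), (Equiv.Perm.sign σ : ℤ) • (List.ofFn (f ∘ σ)).prod

section aux

variable {R : Type*} [Ring R] {J : ℕ}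

/-- Insertion permutation: lift of `π` fixing `0`, composed with the cycle `(0 1 ⋯ j)`. -/
def insPerm (p : Fin (J + 1) × Equiv.Perm (Fin J)) : Equiv.Perm (Fin (J + 1)) :=
  Equiv.Perm.decomposeFin.symm (0, p.2) * Fin.cycleRange p.1

lemma insPerm_bijective : Function.Bijective (insPerm (J := J)) := by
  rw [Fintype.bijective_iff_injective_and_card]
  constructor
  · rintro ⟨j, π⟩ ⟨j', π'⟩ h
    have h0 : ∀ (j : Fin (J+1)) (π : Equiv.Perm (Fin J)), insPerm (j, π) j = 0 := by
      intro j π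
      simp [insPerm, Equiv.Perm.mul_apply]
    have hj : j = j' := by
      have := h0 j π
      rw [h] at this
      have := this.trans (h0 j' π').symm
      exact (insPerm (j', π')).injective this
    subst hj
    have hπ : Equiv.Perm.decomposeFin.symm (0, π) = Equiv.Perm.decomposeFin.symm (0, π') :=
      mul_right_cancel h
    have := Equiv.Perm.decomposeFin.symm.injective hπ
    simp only [Prod.mk.injEq] at this
    simp [this.2]
  · simp [Fintype.card_perm, Nat.factorial_succ]

lemma sign_insPerm (p : Fin (J + 1) × Equiv.Perm (Fin J)) :
    (Equiv.Perm.sign (insPerm p) : ℤ) = (-1) ^ (p.1 : ℕ) * (Equiv.Perm.sign p.2 : ℤ) := by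
  obtain ⟨j, π⟩ := p
  simp only [insPerm, map_mul, Equiv.Perm.decomposeFin.symm_sign, if_pos rfl, one_mul,
    Fin.sign_cycleRange, Units.val_mul]
  push_cast
  ring

lemma word_eq (A : R) (g : Fin J → R) (j : Fin (J + 1)) (π : Equiv.Perm (Fin J)) :
    List.ofFn (Fin.cons A g ∘ (insPerm (j, π))) =
      (List.ofFn (g ∘ π)).take (j : ℕ) ++ A :: (List.ofFn (g ∘ π)).drop (j : ℕ) := by
  have hjJ : (j : ℕ) ≤ J := Nat.lt_succ_iff.mp j.isLt
  apply List.ext_getElem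
  · simp; omega
  intro k h1 h2
  simp only [List.length_ofFn] at h1
  rcases lt_trichotomy k (j : ℕ) with hk | hk | hk
  · have hkJ : k < J := lt_of_lt_of_le hk hjJ
    have hlt : (⟨k, h1⟩ : Fin (J+1)) < j := hk
    have hcyc : Fin.cycleRange j ⟨k, h1⟩ = (⟨k, hkJ⟩ : Fin J).succ := by
      rw [Fin.cycleRange_of_lt hlt]
      apply Fin.ext
      rw [Fin.val_add_one_of_lt (lt_of_lt_of_le hlt (Fin.le_last j))]
      simp
    rw [List.getElem_append_left (by simp; omega)]
    rw [List.getElem_take, List.getElem_ofFn, List.getElem_ofFn]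
    simp only [Function.comp_apply, insPerm, Equiv.Perm.mul_apply, hcyc,
      Equiv.Perm.decomposeFin_symm_apply_succ, Equiv.swap_self, Equiv.refl_apply,
      Fin.cons_succ]
  · rw [List.getElem_append_right (by simp; omega)]
    simp only [List.length_take, List.length_ofFn, min_eq_left hjJ, hk, Nat.sub_self,
      List.getElem_cons_zero, List.getElem_ofFn]
    simp only [Function.comp_apply, insPerm, Equiv.Perm.mul_apply]
    rw [Fin.cycleRange_of_eq (Fin.ext (by simp [hk]))]
    simp
  · have hgt : j < (⟨k, h1⟩ : Fin (J+1)) := hk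
    have hcyc : Fin.cycleRange j ⟨k, h1⟩ = ⟨k, h1⟩ := Fin.cycleRange_of_gt hgt
    have hk1 : k - 1 < J := by omega
    have hsucc : (⟨k, h1⟩ : Fin (J+1)) = (⟨k - 1, hk1⟩ : Fin J).succ := by
      apply Fin.ext; simp; omega
    rw [List.getElem_append_right (by simp; omega)]
    have hlen : ((List.ofFn (g ∘ π)).take (j : ℕ)).length = (j : ℕ) := by simp [hjJ]
    have hidx : k - ((List.ofFn (g ∘ π)).take (j : ℕ)).length = (k - (j:ℕ) - 1) + 1 := by
      rw [hlen]; omega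
    rw [List.getElem_ofFn]
    simp only [Function.comp_apply, insPerm, Equiv.Perm.mul_apply, hcyc]
    rw [hsucc]
    simp only [hidx, List.getElem_cons_succ, List.getElem_drop, List.getElem_ofFn,
      Equiv.Perm.decomposeFin_symm_apply_succ, Equiv.swap_self, Equiv.refl_apply,
      Fin.cons_succ, Function.comp_apply]
    congr 2
    apply Fin.ext
    simp
    omega

end aux

/-- Lemma 1: antisymmetrized `[A B₁ ⋯ B_J]` equals `J!` times the antisymmetrization of
`Σ_{j=0}^{J} (−1)^j B₁⋯B_j A B_{j+1}⋯B_J`. -/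
theorem lemma_one {R : Type*} [Ring R] {J : ℕ} (A : R) (B : Fin J → R) :
    ∑ τ : Equiv.Perm (Fin J), (Equiv.Perm.sign τ : ℤ) • nambu (Fin.cons A (B ∘ τ)) =
      (J.factorial : ℤ) • ∑ τ : Equiv.Perm (Fin J), (Equiv.Perm.sign τ : ℤ) •
        ∑ j ∈ Finset.range (J + 1), ((-1 : ℤ) ^ j) •
          (((List.ofFn (B ∘ τ)).take j).prod * A * ((List.ofFn (B ∘ τ)).drop j).prod) := by
  classical
  set W : Equiv.Perm (Fin J) → ℕ → R := fun ρ j =>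
    ((List.ofFn (B ∘ ρ)).take j).prod * A * ((List.ofFn (B ∘ ρ)).drop j).prod with hW
  have key : ∀ τ : Equiv.Perm (Fin J), nambu (Fin.cons A (B ∘ τ)) =
      ∑ p : Fin (J + 1) × Equiv.Perm (Fin J),
        ((-1 : ℤ) ^ (p.1 : ℕ) * (Equiv.Perm.sign p.2 : ℤ)) • W (τ * p.2) (p.1 : ℕ) := by
    intro τ
    unfold nambu
    rw [← Fintype.sum_bijective insPerm insPerm_bijective _ _ (fun p => rfl)]
    refine Finset.sum_congr rfl fun p _ => ?_
    obtain ⟨j, π⟩ := p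
    rw [sign_insPerm, word_eq A (B ∘ τ) j π]
    congr 1
    simp only [hW, List.prod_append, List.prod_cons]
    rw [mul_assoc]
    congr 2 <;> · congr 1; ext x; simp [Equiv.Perm.mul_apply]
  calc ∑ τ : Equiv.Perm (Fin J), (Equiv.Perm.sign τ : ℤ) • nambu (Fin.cons A (B ∘ τ))
      = ∑ p : Fin (J + 1) × Equiv.Perm (Fin J), ∑ τ : Equiv.Perm (Fin J),
          ((Equiv.Perm.sign τ : ℤ) * ((-1 : ℤ) ^ (p.1 : ℕ) * (Equiv.Perm.sign p.2 : ℤ))) •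
            W (τ * p.2) (p.1 : ℕ) := by
        rw [Finset.sum_comm]
        refine Finset.sum_congr rfl fun τ _ => ?_
        rw [key τ, Finset.smul_sum]
        exact Finset.sum_congr rfl fun p _ => (smul_smul _ _ _)
    _ = ∑ p : Fin (J + 1) × Equiv.Perm (Fin J), ∑ ρ : Equiv.Perm (Fin J),
          ((-1 : ℤ) ^ (p.1 : ℕ) * (Equiv.Perm.sign ρ : ℤ)) • W ρ (p.1 : ℕ) := by
        refine Finset.sum_congr rfl fun p _ => ?_
        obtain ⟨j, π⟩ := p
        rw [← Equiv.sum_comp (Equiv.mulRight π⁻¹)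
          (fun τ => ((Equiv.Perm.sign τ : ℤ) * ((-1 : ℤ) ^ (j : ℕ) *
            (Equiv.Perm.sign π : ℤ))) • W (τ * π) (j : ℕ))]
        refine Finset.sum_congr rfl fun ρ _ => ?_
        have hsq : (Equiv.Perm.sign π⁻¹ : ℤ) * (Equiv.Perm.sign π : ℤ) = 1 := by
          rw [← Units.val_mul, ← map_mul, inv_mul_cancel, map_one, Units.val_one]
        simp only [Equiv.coe_mulRight, inv_mul_cancel_right, map_mul, Units.val_mul]
        congr 1
        linear_combination ((-1 : ℤ) ^ (j : ℕ) * (Equiv.Perm.sign ρ : ℤ)) * hsq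
    _ = ∑ j : Fin (J + 1), ∑ _π : Equiv.Perm (Fin J), ∑ ρ : Equiv.Perm (Fin J),
          ((-1 : ℤ) ^ (j : ℕ) * (Equiv.Perm.sign ρ : ℤ)) • W ρ (j : ℕ) := by
        rw [Fintype.sum_prod_type]
    _ = ∑ j : Fin (J + 1), (J.factorial : ℤ) • ∑ ρ : Equiv.Perm (Fin J),
          ((-1 : ℤ) ^ (j : ℕ) * (Equiv.Perm.sign ρ : ℤ)) • W ρ (j : ℕ) := by
        refine Finset.sum_congr rfl fun j _ => ?_
        rw [Finset.sum_const, Finset.card_univ, Fintype.card_perm, Fintype.card_fin,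
          natCast_zsmul]
    _ = (J.factorial : ℤ) • ∑ τ : Equiv.Perm (Fin J), (Equiv.Perm.sign τ : ℤ) •
          ∑ j ∈ Finset.range (J + 1), ((-1 : ℤ) ^ j) • W τ j := by
        rw [← Finset.smul_sum, Finset.sum_comm]
        congr 1
        refine Finset.sum_congr rfl fun τ _ => ?_
        rw [Finset.smul_sum, ← Fin.sum_univ_eq_sum_range
          (fun j => (Equiv.Perm.sign τ : ℤ) • ((-1 : ℤ) ^ j) • W τ j)]
        refine Finset.sum_congr rfl fun j _ => ?_
        rw [smul_smul, mul_comm]
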